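/- Let Γ = (V, E) be a graph and F a flat of the graphic matroid with S ⊆ F an nbc spanning forest of Γ[F] (all larger endpoints distinct). In the exterior algebra Λ over ℚ on generators x_v for v ∈ V, let I_F be the ideal generated by {x_{h(e)} - x_{t(e)} : e ∈ F}. Then the quotient Λ/I_F has ℚ-vector space basis given by the images of the square-free monomials x_{i_1} ⋯ x_{i_r} where no i_j equals h(e) for any e ∈ S. In particular dim_ℚ(Λ/I_F) = 2^{|V| - |S|}. -/

import Mathlib

open SimpleGraph

section Defs

variable {V : Type*}

/-- The larger endpoint (head) of an edge, with respect to a linear order on vertices. -/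
def esup [LinearOrder V] (e : Sym2 V) : V :=
  Sym2.lift ⟨fun a b => a ⊔ b, fun a b => sup_comm a b⟩ e

/-- The smaller endpoint (tail) of an edge. -/
def einf [LinearOrder V] (e : Sym2 V) : V :=
  Sym2.lift ⟨fun a b => a ⊓ b, fun a b => inf_comm a b⟩ e

/-- The order on edges induced by a linear order on vertices:
`e < e'` iff `h(e) < h(e')`, or `h(e) = h(e')` and `t(e) < t(e')`. -/
def edgeLT [LinearOrder V] (e f : Sym2 V) : Prop :=
  esup e < esup f ∨ (esup e = esup f ∧ einf e < einf f)

/-- The linear order on the vertices is a perfect elimination ordering: every vertex is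
simplicial in the induced subgraph on the vertices below it. -/
def IsPEO [LinearOrder V] (G : SimpleGraph V) : Prop :=
  ∀ v u w : V, u < v → w < v → u ≠ w → G.Adj u v → G.Adj w v → G.Adj u w

/-- A cycle (walk) in a graph has a chord. -/
def SimpleGraph.Walk.HasChord {G : SimpleGraph V} {v : V} (c : G.Walk v v) : Prop :=
  ∃ a b : V, a ∈ c.support ∧ b ∈ c.support ∧ G.Adj a b ∧ s(a, b) ∉ c.edges

/-- A graph is chordal if every cycle with more than three vertices has a chord. -/
def SimpleGraph.IsChordal (G : SimpleGraph V) : Prop :=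
  ∀ (v : V) (c : G.Walk v v), c.IsCycle → 3 < c.length → c.HasChord

/-- `S` is the edge set of a cycle of `G`. -/
def IsCycleEdges [DecidableEq V] (G : SimpleGraph V) (S : Finset (Sym2 V)) : Prop :=
  ∃ (v : V) (c : G.Walk v v), c.IsCycle ∧ c.edges.toFinset = S

/-- `S` is a broken circuit: there is an edge `e` smaller than every element of `S` such that
`S ∪ {e}` is the edge set of a cycle. -/
def IsBrokenCircuit [LinearOrder V] (G : SimpleGraph V) (S : Finset (Sym2 V)) : Prop :=
  ∃ e : Sym2 V, e ∉ S ∧ (∀ f ∈ S, edgeLT e f) ∧ IsCycleEdges G (insert e S)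

/-- `S` is an nbc set: a set of edges of `G` no subset of which is a broken circuit. -/
def IsNBC [LinearOrder V] (G : SimpleGraph V) (S : Finset (Sym2 V)) : Prop :=
  ↑S ⊆ G.edgeSet ∧ ∀ T ⊆ S, ¬IsBrokenCircuit G T

end Defs

/-- `S` spans the subgraph `Γ[F]`. -/
def SpansFlat {V : Type*} (F S : Set (Sym2 V)) : Prop :=
  ∀ u w : V, s(u, w) ∈ F → (SimpleGraph.fromEdgeSet S).Reachable u w

section ExtAlg

variable (V : Type*) [Fintype V] [LinearOrder V]

/-- The exterior algebra over `ℚ` with degree-one generators `x_v` for `v ∈ V`. -/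
abbrev ExtV := ExteriorAlgebra ℚ (V → ℚ)

/-- The generator `x_v`. -/
noncomputable def xgen (v : V) : ExtV V := ExteriorAlgebra.ι ℚ (Pi.single v 1)

/-- The relation generating the ideal `I_F`: `x_{h(e)} - x_{t(e)}` for `e ∈ F`. -/
def relF (F : Finset (Sym2 V)) (a b : ExtV V) : Prop :=
  b = 0 ∧ ∃ e ∈ F, a = xgen V (esup e) - xgen V (einf e)

/-- The square-free monomial `x_{i_1} ⋯ x_{i_r}` indexed by a subset `T ⊆ V`,
with the factors in increasing order. -/
noncomputable def xmon (T : Finset V) : ExtV V :=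
  ((T.sort (· ≤ ·)).map (xgen V)).prod

end ExtAlg



section Rep
variable {V : Type*} [Fintype V] [LinearOrder V]

/-- sign of inserting v before T -/
def sgn (v : V) (T : Finset V) : ℚ := (-1) ^ (T.filter (· < v)).card

/-- creation operator -/
def cop (v : V) : ((Finset V → ℚ)) →ₗ[ℚ] (Finset V → ℚ) where
  toFun f := fun T => if v ∈ T then sgn v (T.erase v) * f (T.erase v) else 0
  map_add' f g := by funext T; simp only [Pi.add_apply]; split <;> ring
  map_smul' a f := by funext T; simp only [Pi.smul_apply, smul_eq_mul, RingHom.id_apply]; split <;> ring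

lemma sgn_insert {u v : V} {T : Finset V} (hv : v ∉ T) (huv : u ≠ v) :
    sgn u (insert v T) = (if v < u then -1 else 1) * sgn u T := by
  unfold sgn
  rw [Finset.filter_insert]
  split
  · rw [Finset.card_insert_of_notMem (fun h => hv (Finset.mem_filter.1 h).1)]
    ring
  · ring

lemma cop_anticomm (u v : V) : cop (V := V) u ∘ₗ cop v = - (cop v ∘ₗ cop u) := by
  ext f T
  simp only [LinearMap.comp_apply, LinearMap.neg_apply, Pi.neg_apply, cop, LinearMap.coe_mk,
    AddHom.coe_mk]
  rcases eq_or_ne u v with rfl | huv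
  · simp [Finset.notMem_erase]
  by_cases hu : u ∈ T <;> by_cases hv : v ∈ T
  · have hvu : v ∈ T.erase u := Finset.mem_erase.2 ⟨(Ne.symm huv), hv⟩
    have huv' : u ∈ T.erase v := Finset.mem_erase.2 ⟨huv, hu⟩
    rw [if_pos hu, if_pos hvu, if_pos hv, if_pos huv']
    rw [show (T.erase v).erase u = (T.erase u).erase v from Finset.erase_right_comm]
    set R := (T.erase u).erase v with hR
    have hvR : v ∉ R := Finset.notMem_erase _ _
    have huR : u ∉ R := by rw [hR, Finset.erase_right_comm]; exact Finset.notMem_erase _ _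
    have h1 : T.erase u = insert v R := by
      rw [hR, Finset.insert_erase hvu]
    have h2 : T.erase v = insert u R := by
      rw [hR, Finset.erase_right_comm, Finset.insert_erase huv']
    rw [h1, h2, sgn_insert hvR huv, sgn_insert huR (Ne.symm huv)]
    rcases lt_or_gt_of_ne huv with h | h
    · rw [if_neg (not_lt.2 h.le), if_pos h]; ring
    · rw [if_pos h, if_neg (not_lt.2 h.le)]; ring
  · rw [if_pos hu, if_neg (fun h => hv (Finset.mem_of_mem_erase h)), if_neg hv]; ring
  · rw [if_neg hu, if_pos hv, if_neg (fun h => hu (Finset.mem_of_mem_erase h))]; ring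
  · rw [if_neg hu, if_neg hv]; ring

end Rep

section Rep2
variable {V : Type*} [Fintype V] [LinearOrder V]

noncomputable def Frep : (V → ℚ) →ₗ[ℚ] Module.End ℚ (Finset V → ℚ) :=
  (Pi.basisFun ℚ V).constr ℚ cop

lemma Frep_single (v : V) : Frep (Pi.single v 1 : V → ℚ) = cop v := by
  have := (Pi.basisFun ℚ V).constr_basis ℚ cop v
  rwa [Pi.basisFun_apply] at this

lemma Frep_sq (m : V → ℚ) : Frep m * Frep m = 0 := by
  have hm : Frep m = ∑ v, m v • cop v := by
    rw [Frep, Module.Basis.constr_apply_fintype]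
    simp [Pi.basisFun_equivFun]
  rw [hm, Finset.sum_mul_sum]
  have key : ∀ u v : V, (m u • cop u) * (m v • cop v)
      = - ((m v • cop v) * (m u • cop u)) := by
    intro u v
    have h := cop_anticomm u v
    have : (cop u : Module.End ℚ (Finset V → ℚ)) * cop v = -(cop v * cop u) := h
    rw [smul_mul_smul_comm, smul_mul_smul_comm, this, smul_neg, mul_comm (m u)]
  set X := ∑ u, ∑ v, (m u • cop u) * (m v • cop v) with hX
  have h2 : X = -X := by
    conv_lhs => rw [hX, Finset.sum_comm]
    rw [show (∑ v, ∑ u, (m u • cop u) * (m v • cop v))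
        = ∑ v, ∑ u, -((m v • cop v) * (m u • cop u)) from
      Finset.sum_congr rfl fun v _ => Finset.sum_congr rfl fun u _ => key u v]
    rw [hX]
    simp only [Finset.sum_neg_distrib]
  have h3 : (2 : ℚ) • X = 0 := by
    rw [two_smul]
    nth_rewrite 1 [h2]
    exact neg_add_cancel X
  have h4 := (smul_eq_zero.mp h3).resolve_left (by norm_num)
  exact h4

noncomputable def PhiRep : ExtV V →ₐ[ℚ] Module.End ℚ (Finset V → ℚ) :=
  ExteriorAlgebra.lift ℚ ⟨Frep, Frep_sq⟩

lemma PhiRep_xgen (v : V) : PhiRep (xgen V v) = cop v := by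
  rw [PhiRep, xgen, ExteriorAlgebra.lift_ι_apply, Frep_single]

/-- evaluation at the vacuum vector -/
noncomputable def evac : ExtV V →ₗ[ℚ] (Finset V → ℚ) :=
  (LinearMap.applyₗ (Pi.single ∅ 1 : Finset V → ℚ)).comp PhiRep.toLinearMap

lemma cop_single (v : V) (S : Finset V) (hv : v ∉ S) (hlt : ∀ u ∈ S, v < u) :
    cop v (Pi.single S 1) = Pi.single (insert v S) 1 := by
  funext T
  simp only [cop, LinearMap.coe_mk, AddHom.coe_mk]
  by_cases hvT : v ∈ T
  · rw [if_pos hvT]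
    by_cases hTS : T.erase v = S
    · have hT : T = insert v S := by rw [← hTS, Finset.insert_erase hvT]
      have hsgn : sgn v S = 1 := by
        unfold sgn
        rw [Finset.filter_false_of_mem (fun u hu => not_lt.2 (hlt u hu).le), Finset.card_empty,
          pow_zero]
      rw [hTS, hsgn, hT, Pi.single_eq_same, Pi.single_eq_same, one_mul]
    · have hT : T ≠ insert v S := by
        intro h; apply hTS; rw [h, Finset.erase_insert hv]
      rw [Pi.single_eq_of_ne hTS, Pi.single_eq_of_ne hT, mul_zero]
  · rw [if_neg hvT]
    have hT : T ≠ insert v S := fun h => hvT (h ▸ Finset.mem_insert_self v S)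
    rw [Pi.single_eq_of_ne hT]

lemma evac_mprod (l : List V) (hl : l.Pairwise (· < ·)) :
    evac ((l.map (xgen V)).prod) = Pi.single l.toFinset 1 := by
  induction l with
  | nil =>
    simp only [List.map_nil, List.prod_nil, List.toFinset_nil]
    show PhiRep (1 : ExtV V) (Pi.single ∅ 1) = _
    rw [map_one]
    rfl
  | cons v l ih =>
    have hl' : l.Pairwise (· < ·) := hl.of_cons
    have hvl : ∀ u ∈ l.toFinset, v < u := fun u hu =>
      List.rel_of_pairwise_cons hl (List.mem_toFinset.1 hu)
    have hv : v ∉ l.toFinset := fun h => lt_irrefl v (hvl v h)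
    simp only [List.map_cons, List.prod_cons, List.toFinset_cons]
    show PhiRep (xgen V v * (l.map (xgen V)).prod) (Pi.single ∅ 1) = _
    rw [map_mul, PhiRep_xgen]
    have : PhiRep ((l.map (xgen V)).prod) (Pi.single ∅ 1) = Pi.single l.toFinset 1 := ih hl'
    show cop v (PhiRep ((l.map (xgen V)).prod) (Pi.single ∅ 1)) = _
    rw [this, cop_single v _ hv hvl]

lemma evac_xmon (T : Finset V) : evac (xmon V T) = Pi.single T 1 := by
  have h := evac_mprod (V := V) (T.sort (· ≤ ·)) (T.sortedLT_sort.pairwise)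
  rw [Finset.sort_toFinset] at h
  exact h

end Rep2

section Rho
variable {V : Type*} [Fintype V] [LinearOrder V]

lemma measure_mono {u v : V} (h : u < v) :
    (Finset.univ.filter (· < u)).card < (Finset.univ.filter (· < v)).card := by
  apply Finset.card_lt_card
  refine (Finset.ssubset_iff_of_subset ?_).2 ⟨u, ?_, ?_⟩
  · exact fun w hw => Finset.mem_filter.2 ⟨Finset.mem_univ _,
      lt_trans (Finset.mem_filter.1 hw).2 h⟩
  · exact Finset.mem_filter.2 ⟨Finset.mem_univ _, h⟩
  · simp

noncomputable def rho (S : Finset (Sym2 V)) (hS : ∀ e ∈ S, einf e < esup e) : V → V :=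
  (Finite.to_wellFoundedLT (α := V)).wf.fix
    (fun v IH =>
      if h : ∃ e ∈ S, esup e = v then IH (einf h.choose)
        (lt_of_lt_of_eq (hS _ h.choose_spec.1) h.choose_spec.2)
      else v)

lemma rho_eq (S : Finset (Sym2 V)) (hS : ∀ e ∈ S, einf e < esup e) (v : V) :
    rho S hS v = if h : ∃ e ∈ S, esup e = v then rho S hS (einf h.choose) else v :=
  WellFounded.fix_eq _ _ v

lemma rho_fix {S : Finset (Sym2 V)} {hS : ∀ e ∈ S, einf e < esup e} {v : V}
    (hv : ∀ e ∈ S, esup e ≠ v) : rho S hS v = v := by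
  rw [rho_eq, dif_neg]
  push_neg
  exact hv

lemma rho_nonhead (S : Finset (Sym2 V)) (hS : ∀ e ∈ S, einf e < esup e) (v : V) :
    ∀ e ∈ S, esup e ≠ rho S hS v := by
  induction v using WellFoundedLT.induction with
  | _ v IH =>
    by_cases h : ∃ e ∈ S, esup e = v
    · rw [rho_eq, dif_pos h]
      exact IH _ (lt_of_lt_of_eq (hS _ h.choose_spec.1) h.choose_spec.2)
    · push_neg at h
      rw [rho_fix h]
      exact h

lemma rho_step {S : Finset (Sym2 V)} {hS : ∀ e ∈ S, einf e < esup e}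
    (hinj : Set.InjOn esup (↑S : Set (Sym2 V))) {e : Sym2 V} (he : e ∈ S) :
    rho S hS (esup e) = rho S hS (einf e) := by
  have h : ∃ f ∈ S, esup f = esup e := ⟨e, he, rfl⟩
  rw [rho_eq, dif_pos h]
  have := h.choose_spec
  have hc : h.choose = e := hinj (by exact_mod_cast this.1) (by exact_mod_cast he) this.2
  rw [hc]

end Rho



section Edges
variable {V : Type*} [LinearOrder V]

lemma esup_mk (a b : V) : esup s(a, b) = a ⊔ b := rfl

lemma einf_mk (a b : V) : einf s(a, b) = a ⊓ b := rfl

lemma sym2_sup_inf (e : Sym2 V) : s(esup e, einf e) = e := by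
  induction e using Sym2.inductionOn with
  | hf a b =>
    rw [esup_mk, einf_mk]
    rcases le_total a b with h | h
    · rw [sup_eq_right.2 h, inf_eq_left.2 h, Sym2.eq_swap]
    · rw [sup_eq_left.2 h, inf_eq_right.2 h]

lemma einf_lt_esup {G : SimpleGraph V} {e : Sym2 V} (he : e ∈ G.edgeSet) :
    einf e < esup e := by
  induction e using Sym2.inductionOn with
  | hf a b =>
    rw [esup_mk, einf_mk]
    exact inf_lt_sup.2 (G.ne_of_adj ((SimpleGraph.mem_edgeSet G).1 he))

end Edges

section SortSec
variable {V : Type*} [LinearOrder V]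

lemma sort_insert_eq {v : V} {T : Finset V} (hv : v ∉ T) :
    Finset.sort (insert v T) (· ≤ ·) = List.orderedInsert (· ≤ ·) v (Finset.sort T (· ≤ ·)) := by
  have h1 : List.Perm (List.orderedInsert (· ≤ ·) v (Finset.sort T (· ≤ ·)))
      (v :: Finset.sort T (· ≤ ·)) := List.perm_orderedInsert _ _ _
  have h2 : List.Perm (Finset.sort (insert v T) (· ≤ ·)) (v :: Finset.sort T (· ≤ ·)) := by
    rw [← Multiset.coe_eq_coe, Finset.sort_eq, ← Multiset.cons_coe, Finset.sort_eq,
      Finset.insert_val_of_notMem hv]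
  exact List.Perm.eq_of_pairwise' (Finset.pairwise_sort _ _)
    (List.Pairwise.orderedInsert (r := (· ≤ ·)) v _ (Finset.pairwise_sort _ _)) (h2.trans h1.symm)

end SortSec

section Mul
variable {V : Type*} [Fintype V] [LinearOrder V]

lemma xgen_sq (v : V) : xgen V v * xgen V v = 0 := ExteriorAlgebra.ι_sq_zero _

lemma xgen_anticomm (u v : V) : xgen V u * xgen V v = -(xgen V v * xgen V u) :=
  eq_neg_of_add_eq_zero_left (ExteriorAlgebra.ι_add_mul_swap _ _)

lemma xgen_mul_mprod (l : List V) (v : V) :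
    (v ∈ l → xgen V v * (l.map (xgen V)).prod = 0) ∧
    (v ∉ l → ∃ s : ℚ, (s = 1 ∨ s = -1) ∧
      xgen V v * (l.map (xgen V)).prod
        = s • ((List.orderedInsert (· ≤ ·) v l).map (xgen V)).prod) := by
  induction l with
  | nil =>
    refine ⟨fun h => absurd h List.not_mem_nil, fun _ => ⟨1, Or.inl rfl, ?_⟩⟩
    simp
  | cons a l ih =>
    constructor
    · intro hv
      by_cases hva : v = a
      · subst hva
        rw [List.map_cons, List.prod_cons, ← mul_assoc, xgen_sq, zero_mul]
      · have hvl : v ∈ l := (List.mem_cons.1 hv).resolve_left hva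
        rw [List.map_cons, List.prod_cons, ← mul_assoc, xgen_anticomm, neg_mul, mul_assoc,
          ih.1 hvl, mul_zero, neg_zero]
    · intro hv
      have hva : v ≠ a := fun h => hv (h ▸ List.mem_cons_self)
      have hvl : v ∉ l := fun h => hv (List.mem_cons_of_mem a h)
      rcases lt_or_gt_of_ne hva with h | h
      · refine ⟨1, Or.inl rfl, ?_⟩
        rw [List.orderedInsert, if_pos h.le, one_smul]
        simp only [List.map_cons, List.prod_cons]
      · obtain ⟨s, hs, hmul⟩ := ih.2 hvl
        refine ⟨-s, by rcases hs with h' | h' <;> subst h' <;> simp, ?_⟩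
        rw [List.orderedInsert, if_neg (not_le.2 h), List.map_cons, List.prod_cons,
          ← mul_assoc, xgen_anticomm, neg_mul, mul_assoc, hmul, List.map_cons,
          List.prod_cons, mul_smul_comm, neg_smul]

lemma xgen_mul_xmon_mem {v : V} {T : Finset V} (hv : v ∈ T) :
    xgen V v * xmon V T = 0 :=
  (xgen_mul_mprod (T.sort (· ≤ ·)) v).1 ((Finset.mem_sort _).2 hv)

lemma xgen_mul_xmon_not_mem {v : V} {T : Finset V} (hv : v ∉ T) :
    ∃ s : ℚ, (s = 1 ∨ s = -1) ∧ xgen V v * xmon V T = s • xmon V (insert v T) := by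
  obtain ⟨s, hs, hmul⟩ := (xgen_mul_mprod (T.sort (· ≤ ·)) v).2
    (fun h => hv ((Finset.mem_sort _).1 h))
  refine ⟨s, hs, ?_⟩
  simp only [xmon]
  rw [sort_insert_eq hv]
  exact hmul

lemma xmon_empty : xmon V (∅ : Finset V) = 1 := by
  rw [xmon, Finset.sort_empty, List.map_nil, List.prod_nil]

lemma xmon_singleton (v : V) : xmon V {v} = xgen V v := by
  rw [xmon, Finset.sort_singleton, List.map_singleton, List.prod_singleton]

end Mul


section Proj
variable {V : Type*} [Fintype V] [LinearOrder V]

noncomputable def pmap (S : Finset (Sym2 V)) (hS : ∀ e ∈ S, einf e < esup e) :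
    (V → ℚ) →ₗ[ℚ] (V → ℚ) :=
  (Pi.basisFun ℚ V).constr ℚ (fun v => (Pi.single (rho S hS v) 1 : V → ℚ))

noncomputable def PhiRho (S : Finset (Sym2 V)) (hS : ∀ e ∈ S, einf e < esup e) :
    ExtV V →ₐ[ℚ] ExtV V :=
  ExteriorAlgebra.lift ℚ ⟨(ExteriorAlgebra.ι ℚ).comp (pmap S hS), fun m => by
    simp only [LinearMap.comp_apply]
    exact ExteriorAlgebra.ι_sq_zero _⟩

lemma PhiRho_xgen (S : Finset (Sym2 V)) (hS : ∀ e ∈ S, einf e < esup e) (v : V) :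
    PhiRho S hS (xgen V v) = xgen V (rho S hS v) := by
  rw [PhiRho, xgen, ExteriorAlgebra.lift_ι_apply, LinearMap.comp_apply]
  congr 1
  have := (Pi.basisFun ℚ V).constr_basis ℚ (fun v => (Pi.single (rho S hS v) 1 : V → ℚ)) v
  rwa [Pi.basisFun_apply] at this

lemma rho_adj_eq {S : Finset (Sym2 V)} {hS : ∀ e ∈ S, einf e < esup e}
    (hinj : Set.InjOn esup (↑S : Set (Sym2 V))) {a b : V}
    (h : (SimpleGraph.fromEdgeSet (↑S : Set (Sym2 V))).Adj a b) :
    rho S hS a = rho S hS b := by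
  rw [SimpleGraph.fromEdgeSet_adj] at h
  obtain ⟨hmem, hne⟩ := h
  have hmem' : s(a, b) ∈ S := hmem
  have key := rho_step (hS := hS) hinj hmem'
  rcases lt_or_gt_of_ne hne with hab | hab
  · rw [esup_mk, einf_mk, sup_eq_right.2 hab.le, inf_eq_left.2 hab.le] at key
    exact key.symm
  · rw [esup_mk, einf_mk, sup_eq_left.2 hab.le, inf_eq_right.2 hab.le] at key
    exact key

lemma rho_reachable {S : Finset (Sym2 V)} {hS : ∀ e ∈ S, einf e < esup e}
    (hinj : Set.InjOn esup (↑S : Set (Sym2 V))) {u w : V}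
    (h : (SimpleGraph.fromEdgeSet (↑S : Set (Sym2 V))).Reachable u w) :
    rho S hS u = rho S hS w := by
  obtain ⟨p⟩ := h
  induction p with
  | nil => rfl
  | cons hadj _ ih => exact (rho_adj_eq hinj hadj).trans ih

lemma mk_rel (F : Finset (Sym2 V)) {e : Sym2 V} (he : e ∈ F) :
    RingQuot.mkAlgHom ℚ (relF V F) (xgen V (esup e))
      = RingQuot.mkAlgHom ℚ (relF V F) (xgen V (einf e)) := by
  have hrel : relF V F (xgen V (esup e) - xgen V (einf e)) 0 := ⟨rfl, e, he, rfl⟩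
  have h2 := RingQuot.mkAlgHom_rel ℚ hrel
  rw [map_sub, map_zero, sub_eq_zero] at h2
  exact h2

lemma mk_xgen_rho (F S : Finset (Sym2 V)) (hSF : S ⊆ F)
    (hS : ∀ e ∈ S, einf e < esup e) (v : V) :
    RingQuot.mkAlgHom ℚ (relF V F) (xgen V v)
      = RingQuot.mkAlgHom ℚ (relF V F) (xgen V (rho S hS v)) := by
  induction v using WellFoundedLT.induction with
  | _ v IH =>
    by_cases h : ∃ e ∈ S, esup e = v
    · rw [rho_eq, dif_pos h]
      obtain ⟨he, hv⟩ := h.choose_spec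
      have h1 : RingQuot.mkAlgHom ℚ (relF V F) (xgen V (esup h.choose))
          = RingQuot.mkAlgHom ℚ (relF V F) (xgen V v) := by rw [hv]
      rw [← h1, mk_rel F (hSF he)]
      exact IH _ (lt_of_lt_of_eq (hS _ he) hv)
    · push_neg at h
      rw [rho_fix h]

end Proj

/-- Let `F` be a flat of the graphic matroid of `Γ` and `S ⊆ F` a spanning forest of `Γ[F]`
whose edges have distinct larger endpoints.  In the exterior algebra on `x_v (v ∈ V)` modulo
the ideal generated by `x_{h(e)} - x_{t(e)}` for `e ∈ F`, the images of the square-free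
monomials avoiding the larger endpoints of edges of `S` form a `ℚ`-basis, and the quotient
has dimension `2 ^ (|V| - |S|)`. -/
theorem stmt_5 {V : Type*} [Fintype V] [LinearOrder V] (G : SimpleGraph V)
    (F S : Finset (Sym2 V)) (hF : ↑F ⊆ G.edgeSet) (hSF : S ⊆ F)
    (hforest : ∀ T ⊆ S, ¬IsCycleEdges G T)
    (hSspan : SpansFlat (↑F) (↑S : Set (Sym2 V)))
    (hinj : Set.InjOn esup (↑S : Set (Sym2 V))) :
    LinearIndependent ℚ
        (fun T : {T : Finset V // ∀ e ∈ S, esup e ∉ T} =>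
          RingQuot.mkAlgHom ℚ (relF V F) (xmon V T.1)) ∧
      Submodule.span ℚ
          (Set.range (fun T : {T : Finset V // ∀ e ∈ S, esup e ∉ T} =>
            RingQuot.mkAlgHom ℚ (relF V F) (xmon V T.1))) = ⊤ ∧
      Module.finrank ℚ (RingQuot (relF V F)) = 2 ^ (Fintype.card V - S.card) := by
  classical
  have hS : ∀ e ∈ S, einf e < esup e := fun e he => einf_lt_esup (hF (hSF he))
  have hkill : ∀ ⦃x y : ExtV V⦄, relF V F x y → PhiRho S hS x = PhiRho S hS y := by
    rintro x y ⟨rfl, e, heF, rfl⟩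
    rw [map_sub, PhiRho_xgen, PhiRho_xgen, map_zero]
    have hreach : (SimpleGraph.fromEdgeSet (↑S : Set (Sym2 V))).Reachable (esup e) (einf e) :=
      hSspan (esup e) (einf e) (by rw [sym2_sup_inf]; exact heF)
    rw [rho_reachable hinj hreach, sub_self]
  let ψ : RingQuot (relF V F) →ₐ[ℚ] ExtV V := RingQuot.liftAlgHom ℚ ⟨PhiRho S hS, hkill⟩
  have hψmk : ∀ x : ExtV V, ψ (RingQuot.mkAlgHom ℚ (relF V F) x) = PhiRho S hS x := fun x =>
    RingQuot.liftAlgHom_mkAlgHom_apply ℚ _ hkill x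
  have hfix : ∀ (T : Finset V), (∀ e ∈ S, esup e ∉ T) → PhiRho S hS (xmon V T) = xmon V T := by
    intro T hT
    rw [xmon, map_list_prod, List.map_map]
    congr 1
    apply List.map_congr_left
    intro v hv
    have hvT : v ∈ T := (Finset.mem_sort _).1 hv
    show PhiRho S hS (xgen V v) = xgen V v
    rw [PhiRho_xgen, rho_fix (fun e he heq => hT e he (by rw [heq]; exact hvT))]
  -- linear independence
  have hind : LinearIndependent ℚ
      (fun T : {T : Finset V // ∀ e ∈ S, esup e ∉ T} =>
        RingQuot.mkAlgHom ℚ (relF V F) (xmon V T.1)) := by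
    apply LinearIndependent.of_comp (evac ∘ₗ ψ.toLinearMap)
    have heq : (⇑(evac ∘ₗ ψ.toLinearMap) ∘ fun T : {T : Finset V // ∀ e ∈ S, esup e ∉ T} =>
        RingQuot.mkAlgHom ℚ (relF V F) (xmon V T.1))
        = fun T => (Pi.single T.1 1 : Finset V → ℚ) := by
      funext T
      show evac (ψ (RingQuot.mkAlgHom ℚ (relF V F) (xmon V T.1))) = _
      rw [hψmk, hfix T.1 T.2, evac_xmon]
    rw [heq]
    have hb := (Pi.basisFun ℚ (Finset V)).linearIndependent.comp
      (Subtype.val : {T : Finset V // ∀ e ∈ S, esup e ∉ T} → Finset V) Subtype.val_injective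
    have heq2 : (⇑(Pi.basisFun ℚ (Finset V)) ∘ (Subtype.val :
        {T : Finset V // ∀ e ∈ S, esup e ∉ T} → Finset V))
        = fun T : {T : Finset V // ∀ e ∈ S, esup e ∉ T} => (Pi.single T.1 1 : Finset V → ℚ) := by
      funext T
      show Pi.basisFun ℚ (Finset V) T.1 = _
      rw [Pi.basisFun_apply]
    rwa [heq2] at hb
  -- spanning
  have hspan : Submodule.span ℚ
      (Set.range (fun T : {T : Finset V // ∀ e ∈ S, esup e ∉ T} =>
        RingQuot.mkAlgHom ℚ (relF V F) (xmon V T.1))) = ⊤ := by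
    set N := Submodule.span ℚ
      (Set.range (fun T : {T : Finset V // ∀ e ∈ S, esup e ∉ T} =>
        RingQuot.mkAlgHom ℚ (relF V F) (xmon V T.1))) with hN
    rw [eq_top_iff]
    rintro x -
    obtain ⟨y, rfl⟩ := RingQuot.mkAlgHom_surjective ℚ (relF V F) x
    have hmem : ∀ (T : Finset V), (∀ e ∈ S, esup e ∉ T) →
        RingQuot.mkAlgHom ℚ (relF V F) (xmon V T) ∈ N :=
      fun T hT => Submodule.subset_span ⟨⟨T, hT⟩, rfl⟩
    have hone : (1 : RingQuot (relF V F)) ∈ N := by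
      have := hmem ∅ (fun e _ => Finset.notMem_empty _)
      rwa [xmon_empty, map_one] at this
    have hxv : ∀ v : V, (∀ e ∈ S, esup e ≠ v) →
        ∀ y ∈ N, RingQuot.mkAlgHom ℚ (relF V F) (xgen V v) * y ∈ N := by
      intro v hv y hy
      induction hy using Submodule.span_induction with
      | mem z hz =>
        obtain ⟨T, rfl⟩ := hz
        rw [← map_mul]
        by_cases hvT : v ∈ T.1
        · rw [xgen_mul_xmon_mem hvT, map_zero]
          exact N.zero_mem
        · obtain ⟨sc, _, heq⟩ := xgen_mul_xmon_not_mem hvT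
          rw [heq, map_smul]
          refine N.smul_mem _ (hmem _ ?_)
          intro e he hmem'
          rcases Finset.mem_insert.1 hmem' with h' | h'
          · exact hv e he h'
          · exact T.2 e he h'
      | zero => rw [mul_zero]; exact N.zero_mem
      | add a b _ _ ha hb => rw [mul_add]; exact N.add_mem ha hb
      | smul a z _ hz => rw [mul_smul_comm]; exact N.smul_mem _ hz
    have hxv' : ∀ v : V, RingQuot.mkAlgHom ℚ (relF V F) (xgen V v) ∈ N := by
      intro v
      rw [mk_xgen_rho F S hSF hS v]
      have hcond : ∀ e ∈ S, esup e ∉ ({rho S hS v} : Finset V) := fun e he h =>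
        rho_nonhead S hS v e he (Finset.mem_singleton.1 h)
      have := hmem _ hcond
      rwa [xmon_singleton] at this
    have hlist : ∀ l : List V, (∀ v ∈ l, ∀ e ∈ S, esup e ≠ v) →
        ∀ y ∈ N, RingQuot.mkAlgHom ℚ (relF V F) ((l.map (xgen V)).prod) * y ∈ N := by
      intro l
      induction l with
      | nil =>
        intro _ y hy
        rw [List.map_nil, List.prod_nil, map_one, one_mul]
        exact hy
      | cons a l ih =>
        intro hl y hy
        rw [List.map_cons, List.prod_cons, map_mul, mul_assoc]
        exact hxv a (hl a (List.mem_cons_self)) _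
          (ih (fun v hv => hl v (List.mem_cons_of_mem _ hv)) y hy)
    have hmul : ∀ y1 ∈ N, ∀ y2 ∈ N, y1 * y2 ∈ N := by
      intro y1 hy1 y2 hy2
      induction hy1 using Submodule.span_induction with
      | mem z hz =>
        obtain ⟨T, rfl⟩ := hz
        have hTl : ∀ v ∈ T.1.sort (· ≤ ·), ∀ e ∈ S, esup e ≠ v := by
          intro v hv e he heq
          exact T.2 e he (by rw [heq]; exact (Finset.mem_sort _).1 hv)
        exact hlist _ hTl y2 hy2
      | zero => rw [zero_mul]; exact N.zero_mem
      | add a b _ _ ha hb => rw [add_mul]; exact N.add_mem ha hb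
      | smul a z _ hz => rw [smul_mul_assoc]; exact N.smul_mem _ hz
    have hall : ∀ y : ExtV V, RingQuot.mkAlgHom ℚ (relF V F) y ∈ N := by
      intro y
      induction y using ExteriorAlgebra.induction with
      | algebraMap r =>
        rw [AlgHom.commutes, Algebra.algebraMap_eq_smul_one]
        exact N.smul_mem _ hone
      | ι m =>
        have hm : m = ∑ v, m v • (Pi.single v 1 : V → ℚ) := by
          have h1 : ∑ v, Pi.single v (m v) = m := Finset.univ_sum_single m
          have h2 : ∀ v : V, m v • (Pi.single v 1 : V → ℚ) = Pi.single v (m v) := fun v => by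
            rw [← Pi.single_smul, smul_eq_mul, mul_one]
          calc m = ∑ v, Pi.single v (m v) := h1.symm
            _ = ∑ v, m v • (Pi.single v 1 : V → ℚ) :=
              Finset.sum_congr rfl fun v _ => (h2 v).symm
        have h2 : (ExteriorAlgebra.ι ℚ : (V → ℚ) →ₗ[ℚ] ExtV V) m = ∑ v, m v • xgen V v := by
          conv_lhs => rw [hm]
          rw [map_sum]
          exact Finset.sum_congr rfl fun v _ => by rw [map_smul]; rfl
        rw [h2, map_sum]
        exact Submodule.sum_mem N fun v _ => by
          rw [map_smul]; exact N.smul_mem _ (hxv' v)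
      | mul a b ha hb => rw [map_mul]; exact hmul _ ha _ hb
      | add a b ha hb => rw [map_add]; exact N.add_mem ha hb
    exact hall y
  refine ⟨hind, hspan, ?_⟩
  -- dimension count
  have hb : Module.Basis {T : Finset V // ∀ e ∈ S, esup e ∉ T} ℚ (RingQuot (relF V F)) :=
    Module.Basis.mk hind (by rw [hspan])
  rw [Module.finrank_eq_card_basis hb]
  have hiff : ∀ T : Finset V, (∀ e ∈ S, esup e ∉ T) ↔ T ∈ ((S.image esup)ᶜ).powerset := by
    intro T
    rw [Finset.mem_powerset]
    constructor
    · intro h v hv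
      rw [Finset.mem_compl]
      intro hmem
      obtain ⟨e, he, heq⟩ := Finset.mem_image.1 hmem
      exact h e he (by rw [heq]; exact hv)
    · intro h e he hT
      have := h hT
      rw [Finset.mem_compl] at this
      exact this (Finset.mem_image.2 ⟨e, he, rfl⟩)
  rw [Fintype.card_congr (Equiv.subtypeEquivRight hiff), Fintype.card_coe,
    Finset.card_powerset, Finset.card_compl,
    Finset.card_image_of_injOn hinj]
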